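/- Let A be an m×n real matrix admitting a rank-revealing LU factorization A = Pᵀ L U Qᵀ, where P is an m×m permutation matrix, Q is an n×n permutation matrix, L is an invertible m×m matrix, and U is the m×n block matrix U = [[U₁, U₂], [0, 0]] with U₁ an invertible r×r matrix and U₂ an r×(n−r) matrix. Then the columns of Z = Q · [[−U₁⁻¹ U₂], [I_{n−r}]] form a basis of the null space of A: every x ∈ ℝⁿ with A x = 0 can be written as x = Z y for a unique y ∈ ℝ^{n−r}. -/

import Mathlib

open Matrix

lemma perm_transpose_eq {n : Type*} [DecidableEq n] [Fintype n] (σ : Equiv.Perm n) :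
    (σ.permMatrix ℝ)ᵀ = ((σ⁻¹).permMatrix ℝ) := by
  ext i j
  simp only [Matrix.transpose_apply, Equiv.Perm.permMatrix,
    PEquiv.toMatrix_toPEquiv_apply, Pi.single_apply]
  simp only [Equiv.Perm.inv_def]
  rcases eq_or_ne (σ j) i with h | h
  · subst h; simp
  · rw [if_neg (Ne.symm h), if_neg fun hc => h (by rw [hc]; simp)]

lemma perm_transpose_mul {n : Type*} [DecidableEq n] [Fintype n] (σ : Equiv.Perm n) :
    (σ.permMatrix ℝ)ᵀ * (σ.permMatrix ℝ) = 1 := by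
  rw [perm_transpose_eq]
  rw [show ((σ⁻¹).permMatrix ℝ) * (σ.permMatrix ℝ)
      = (σ.permMatrix ℝ).submatrix (⇑(σ⁻¹)) id from
    PEquiv.toMatrix_toPEquiv_mul _ _]
  ext i j
  simp [Equiv.Perm.permMatrix, PEquiv.toMatrix_toPEquiv_apply, Pi.single_apply, Matrix.submatrix_apply,
    Equiv.toPEquiv_apply, Matrix.one_apply]

lemma perm_mul_transpose {n : Type*} [DecidableEq n] [Fintype n] (σ : Equiv.Perm n) :
    (σ.permMatrix ℝ) * (σ.permMatrix ℝ)ᵀ = 1 := by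
  have := perm_transpose_mul σ⁻¹
  rwa [perm_transpose_eq, inv_inv, ← perm_transpose_eq] at this

lemma perm_isUnit_det {n : Type*} [DecidableEq n] [Fintype n] (σ : Equiv.Perm n) :
    IsUnit (σ.permMatrix ℝ).det := by
  have h := congrArg Matrix.det (perm_mul_transpose σ)
  rw [Matrix.det_mul, Matrix.det_one] at h
  exact IsUnit.of_mul_eq_one _ h

/-- The columns of `Z = Q ⬝ [[-U₁⁻¹U₂],[I]]` form a basis of the null space
of `A`: every `x` with `A x = 0` is `Z y` for a unique `y`. -/
theorem turnback_lu_nullspace_basis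
    {r m' n' : ℕ}
    (A : Matrix (Fin r ⊕ Fin m') (Fin r ⊕ Fin n') ℝ)
    (P : Equiv.Perm (Fin r ⊕ Fin m')) (Q : Equiv.Perm (Fin r ⊕ Fin n'))
    (L : Matrix (Fin r ⊕ Fin m') (Fin r ⊕ Fin m') ℝ) (hL : IsUnit L.det)
    (U₁ : Matrix (Fin r) (Fin r) ℝ) (hU₁ : IsUnit U₁.det)
    (U₂ : Matrix (Fin r) (Fin n') ℝ)
    (hA : A = (P.permMatrix ℝ)ᵀ * L * fromBlocks U₁ U₂ (0 : Matrix (Fin m') (Fin r) ℝ) 0 * (Q.permMatrix ℝ)ᵀ) :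
    ∀ x : Fin r ⊕ Fin n' → ℝ, A.mulVec x = 0 →
      ∃! y : Fin n' → ℝ,
        x = (Q.permMatrix ℝ *
              fromRows (-(U₁⁻¹ * U₂)) (1 : Matrix (Fin n') (Fin n') ℝ)).mulVec y := by
  intro x hx
  set B : Matrix (Fin r ⊕ Fin m') (Fin r ⊕ Fin n') ℝ := fromBlocks U₁ U₂ 0 0 with hB
  set z : Fin r ⊕ Fin n' → ℝ := (Q.permMatrix ℝ)ᵀ.mulVec x with hz
  have hPt : IsUnit ((P.permMatrix ℝ)ᵀ).det := by
    rw [Matrix.det_transpose]; exact perm_isUnit_det P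
  have hxz : x = (Q.permMatrix ℝ).mulVec z := by
    rw [hz, Matrix.mulVec_mulVec, perm_mul_transpose, Matrix.one_mulVec]
  have h0 : B.mulVec z = 0 := by
    have h1 : ((P.permMatrix ℝ)ᵀ).mulVec (L.mulVec (B.mulVec z)) = 0 := by
      rw [hz, Matrix.mulVec_mulVec, Matrix.mulVec_mulVec, Matrix.mulVec_mulVec, ← hx, hA]
    have h2 := (Matrix.mulVec_injective_iff_isUnit.2 ((Matrix.isUnit_iff_isUnit_det _).2 hPt))
      (a₁ := L.mulVec (B.mulVec z)) (a₂ := 0) (by simpa using h1)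
    exact (Matrix.mulVec_injective_iff_isUnit.2 ((Matrix.isUnit_iff_isUnit_det _).2 hL))
      (a₁ := B.mulVec z) (a₂ := 0) (by simpa using h2)
  have hblock : U₁.mulVec (z ∘ Sum.inl) + U₂.mulVec (z ∘ Sum.inr) = 0 := by
    have h := congrFun h0
    rw [hB, Matrix.fromBlocks_mulVec] at h
    funext i; simpa using h (Sum.inl i)
  have hz1 : z ∘ Sum.inl = (-(U₁⁻¹ * U₂)).mulVec (z ∘ Sum.inr) := by
    have h3 : U₁.mulVec (z ∘ Sum.inl) = -(U₂.mulVec (z ∘ Sum.inr)) := by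
      rw [eq_neg_iff_add_eq_zero]; exact hblock
    have h4 := congrArg (U₁⁻¹.mulVec ·) h3
    simp only [Matrix.mulVec_mulVec] at h4
    rw [Matrix.nonsing_inv_mul _ hU₁, Matrix.one_mulVec] at h4
    rw [h4, Matrix.mulVec_neg, Matrix.mulVec_mulVec, Matrix.neg_mulVec]
  refine ⟨z ∘ Sum.inr, ?_, ?_⟩
  · beta_reduce
    rw [← Matrix.mulVec_mulVec, Matrix.fromRows_mulVec, Matrix.one_mulVec, ← hz1]
    rw [hxz, show (z ∘ Sum.inl ⊕ᵥ z ∘ Sum.inr) = z from Sum.elim_comp_inl_inr z]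
  · intro y' hy'
    have h5 : z = Sum.elim ((-(U₁⁻¹ * U₂)).mulVec y') y' := by
      rw [hz, hy', Matrix.mulVec_mulVec, ← Matrix.mul_assoc, perm_transpose_mul,
        Matrix.one_mul, Matrix.fromRows_mulVec, Matrix.one_mulVec]
    funext i
    have := congrFun h5 (Sum.inr i)
    simpa using this.symm
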